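/- Let E ⊂ ℝ^{n+1} be n-ADR with dyadic lattice D, σ = H^n⌊E, and let m be a nonnegative function on subfamilies of D given by m(D') = ∑_{Q∈D'} α_Q with α_Q ≥ 0. Fix Q ∈ D, a ≥ 0, b > 0, and suppose m(D(Q)) ≤ (a+b)σ(Q). Then there exists a family F = {Qⱼ} ⊂ D(Q) of pairwise disjoint cubes and a constant C depending only on n and the ADR constant such that: (i) the restricted measure m_F, defined by m_F(D') = ∑_{P ∈ D' not contained in any Qⱼ} α_P, satisfies m_F(D(Q'))/σ(Q') ≤ Cb for every Q' ⊆ Q; and (ii) σ(⋃_{Qⱼ ∈ F_bad} Qⱼ) ≤ ((a+b)/(a+2b)) σ(Q), where F_bad := {Qⱼ ∈ F : m(D(Qⱼ)∖{Qⱼ}) > a σ(Qⱼ)}. -/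

import Mathlib

open Set Metric MeasureTheory Filter Topology
open scoped ENNReal

open scoped Classical

noncomputable section

/-- `E ⊂ ℝ^{n+1}` is `n`-Ahlfors–David regular with constant `C`:
`E` is closed and `C⁻¹ rⁿ ≤ Hⁿ(E ∩ B(x,r)) ≤ C rⁿ` for `x ∈ E`, `0 < r < diam E`. -/
def IsADR (n : ℕ) (E : Set (EuclideanSpace ℝ (Fin (n+1)))) (C : ℝ) : Prop :=
  IsClosed E ∧ 1 ≤ C ∧
  ∀ x ∈ E, ∀ r : ℝ, 0 < r → ENNReal.ofReal r < EMetric.diam E →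
    ENNReal.ofReal (C⁻¹ * r ^ n) ≤ (Measure.hausdorffMeasure (n:ℝ)).restrict E (ball x r) ∧
    (Measure.hausdorffMeasure (n:ℝ)).restrict E (ball x r) ≤ ENNReal.ofReal (C * r ^ n)

/-- Surface measure `σ = Hⁿ⌊E`. -/
def surf (n : ℕ) (E : Set (EuclideanSpace ℝ (Fin (n+1)))) :
    Measure (EuclideanSpace ℝ (Fin (n+1))) :=
  (Measure.hausdorffMeasure (n:ℝ)).restrict E

/-- A Christ–David dyadic lattice on `E ⊂ ℝ^{n+1}`, with inner-ball constant `a₀` and diameter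
constant `C₁`: cubes of generation `k` have diameter `≤ C₁ 2^{-k}`, contain the surface ball of
radius `a₀ 2^{-k}` about their center, cover `E` at every generation, and are nested. -/
structure DyadicLattice (n : ℕ) (E : Set (EuclideanSpace ℝ (Fin (n+1)))) (a₀ C₁ : ℝ) where
  Cube : Type
  set : Cube → Set (EuclideanSpace ℝ (Fin (n+1)))
  gen : Cube → ℤ
  center : Cube → EuclideanSpace ℝ (Fin (n+1))
  set_inj : Function.Injective set
  nonempty : ∀ Q, (set Q).Nonempty
  subset_E : ∀ Q, set Q ⊆ E
  center_mem : ∀ Q, center Q ∈ set Q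
  cover : ∀ k : ℤ, ∀ x ∈ E, ∃ Q, gen Q = k ∧ x ∈ set Q
  nested : ∀ Q Q', gen Q ≤ gen Q' → set Q' ⊆ set Q ∨ Disjoint (set Q') (set Q)
  diam_le : ∀ Q, Metric.diam (set Q) ≤ C₁ * (2:ℝ) ^ (-gen Q)
  ball_subset : ∀ Q, E ∩ ball (center Q) (a₀ * (2:ℝ) ^ (-gen Q)) ⊆ set Q

/-- Side length `ℓ(Q) = 2^{-gen Q}` of a dyadic cube. -/
def DyadicLattice.len {n : ℕ} {E : Set (EuclideanSpace ℝ (Fin (n+1)))} {a₀ C₁ : ℝ}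
    (L : DyadicLattice n E a₀ C₁) (Q : L.Cube) : ℝ := (2:ℝ) ^ (-L.gen Q)

namespace Corona

/-! ### Generic ENNReal tsum helpers -/

lemma tsum_le_of_sum_le' {ι : Type*} {f : ι → ℝ≥0∞} {c : ℝ≥0∞}
    (h : ∀ s : Finset ι, ∑ a ∈ s, f a ≤ c) : ∑' a, f a ≤ c := by
  rw [ENNReal.tsum_eq_iSup_sum]; exact iSup_le h

lemma div_mul_le (x y : ℝ≥0∞) : x / y * y ≤ x := by
  rcases eq_or_ne y 0 with rfl | h0
  · simp
  rcases eq_or_ne y ⊤ with rfl | ht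
  · simp [ENNReal.div_top]
  · rw [ENNReal.div_mul_cancel h0 ht]

lemma tsum_pred_le_tsum_pred {ι : Type*} (f : ι → ℝ≥0∞) {p q : ι → Prop}
    (h : ∀ i, p i → q i) :
    ∑' i : {i // p i}, f i.1 ≤ ∑' i : {i // q i}, f i.1 := by
  have hinj : Function.Injective (fun x : {i // p i} => (⟨x.1, h _ x.2⟩ : {i // q i})) := by
    intro x y hxy
    simpa [Subtype.ext_iff] using hxy
  exact ENNReal.tsum_comp_le_tsum_of_injective hinj (fun i => f i.1)

lemma tsum_pred_eq_tsum_ite {ι : Type*} (f : ι → ℝ≥0∞) (p : ι → Prop) :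
    ∑' i : {i // p i}, f i.1 = ∑' i, if p i then f i else 0 := by
  rw [show ∑' i : {i // p i}, f i.1 = ∑' i : {i | p i}, f i.1 from rfl, tsum_subtype]
  refine tsum_congr fun i => ?_
  by_cases h : p i
  · rw [Set.indicator_of_mem (show i ∈ {j | p j} from h), if_pos h]
  · rw [Set.indicator_of_notMem (show i ∉ {j | p j} from h), if_neg h]

lemma tsum_pred_add_tsum_pred_le {ι : Type*} (f : ι → ℝ≥0∞) {p q : ι → Prop}
    (hpq : ∀ i, p i → q i → False) :
    (∑' i : {i // p i}, f i.1) + (∑' i : {i // q i}, f i.1)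
      ≤ ∑' i : {i // p i ∨ q i}, f i.1 := by
  rw [tsum_pred_eq_tsum_ite, tsum_pred_eq_tsum_ite, tsum_pred_eq_tsum_ite, ← ENNReal.tsum_add]
  refine Summable.tsum_le_tsum (fun i => ?_) ENNReal.summable ENNReal.summable
  by_cases hp : p i
  · rw [if_pos hp, if_pos (Or.inl hp), if_neg (fun hq => hpq i hp hq), add_zero]
  · rw [if_neg hp, zero_add]
    by_cases hq : q i
    · rw [if_pos hq, if_pos (Or.inr hq)]
    · rw [if_neg hq, if_neg (by tauto)]

lemma ite_tsum {ι : Type*} (c : Prop) [Decidable c] (g : ι → ℝ≥0∞) :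
    (if c then (∑' i, g i) else 0) = ∑' i, (if c then g i else 0) := by
  by_cases h : c <;> simp [h]

/-! ### Cube structure lemmas -/

variable {n : ℕ} {E : Set (EuclideanSpace ℝ (Fin (n+1)))} {a₀ C₁ : ℝ}

lemma gen_le_of_subset (L : DyadicLattice n E a₀ C₁) {P R : L.Cube}
    (h : L.set P ⊆ L.set R) : L.gen R ≤ L.gen P := by
  by_contra hlt
  push_neg at hlt
  rcases L.nested P R hlt.le with hsub | hdis
  · have hPR : P = R := L.set_inj (subset_antisymm h hsub)
    subst hPR; exact lt_irrefl _ hlt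
  · obtain ⟨x, hx⟩ := L.nonempty P
    exact Set.disjoint_left.mp hdis (h hx) hx

lemma eq_of_gen_eq_not_disjoint (L : DyadicLattice n E a₀ C₁) {P R : L.Cube}
    (hg : L.gen P = L.gen R) (hnd : ¬ Disjoint (L.set P) (L.set R)) : P = R := by
  rcases L.nested P R hg.le with h1 | h1
  · rcases L.nested R P hg.ge with h2 | h2
    · exact L.set_inj (subset_antisymm h2 h1)
    · exact absurd h2 hnd
  · exact absurd h1.symm hnd

lemma nested_or_disjoint (L : DyadicLattice n E a₀ C₁) (P R : L.Cube) :
    L.set P ⊆ L.set R ∨ L.set R ⊆ L.set P ∨ Disjoint (L.set P) (L.set R) := by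
  rcases le_total (L.gen P) (L.gen R) with hg | hg
  · rcases L.nested P R hg with h | h
    · exact Or.inr (Or.inl h)
    · exact Or.inr (Or.inr h.symm)
  · rcases L.nested R P hg with h | h
    · exact Or.inl h
    · exact Or.inr (Or.inr h)

lemma subset_of_not_disjoint (L : DyadicLattice n E a₀ C₁) {P R : L.Cube}
    (h : ¬ Disjoint (L.set P) (L.set R)) :
    L.set P ⊆ L.set R ∨ L.set R ⊆ L.set P := by
  rcases nested_or_disjoint L P R with h1 | h1 | h1
  · exact Or.inl h1
  · exact Or.inr h1
  · exact absurd h1 h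

lemma ancestors_finite (L : DyadicLattice n E a₀ C₁) (P Q₀ : L.Cube) :
    {R : L.Cube | L.set P ⊆ L.set R ∧ L.set R ⊆ L.set Q₀}.Finite := by
  apply Set.Finite.of_finite_image (f := L.gen)
  · apply Set.Finite.subset (Set.finite_Icc (L.gen Q₀) (L.gen P))
    rintro k ⟨R, ⟨h1, h2⟩, rfl⟩
    exact ⟨gen_le_of_subset L h2, gen_le_of_subset L h1⟩
  · rintro R ⟨h1, _⟩ R' ⟨h1', _⟩ hg
    refine eq_of_gen_eq_not_disjoint L hg ?_
    obtain ⟨x, hx⟩ := L.nonempty P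
    exact Set.not_disjoint_iff.2 ⟨x, h1 hx, h1' hx⟩

lemma exists_maximal (L : DyadicLattice n E a₀ C₁) {Q₀ : L.Cube} (S : Set L.Cube)
    (hS : ∀ Q ∈ S, L.set Q ⊆ L.set Q₀) {P : L.Cube} (hP : P ∈ S) :
    ∃ M, (M ∈ S ∧ ∀ R ∈ S, L.set M ⊆ L.set R → R = M) ∧ L.set P ⊆ L.set M := by
  have hTfin : {R | R ∈ S ∧ L.set P ⊆ L.set R}.Finite :=
    (ancestors_finite L P Q₀).subset (fun R hR => ⟨hR.2, hS R hR.1⟩)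
  have hTne : {R | R ∈ S ∧ L.set P ⊆ L.set R}.Nonempty := ⟨P, hP, subset_rfl⟩
  obtain ⟨M, hM, hmax⟩ := Set.Finite.exists_maximalFor L.set _ hTfin hTne
  refine ⟨M, ⟨hM.1, ?_⟩, hM.2⟩
  intro R hR hMR
  exact (L.set_inj (subset_antisymm hMR (hmax ⟨hR, hM.2.trans hMR⟩ hMR))).symm

set_option synthInstance.maxHeartbeats 1000000 in
lemma cube_countable (L : DyadicLattice n E a₀ C₁) (ha₀ : 0 < a₀) : Countable L.Cube := by
  obtain ⟨D, hDcount, hDdense⟩ :=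
    TopologicalSpace.exists_countable_dense (EuclideanSpace ℝ (Fin (n+1)))
  have hpos : ∀ Q : L.Cube, 0 < a₀ * (2:ℝ) ^ (-L.gen Q) / 2 := by
    intro Q
    have h2 : (0:ℝ) < (2:ℝ) ^ (-L.gen Q) := zpow_pos (by norm_num) _
    positivity
  choose d hdD hdlt using fun Q : L.Cube => hDdense.exists_dist_lt (L.center Q) (hpos Q)
  haveI : Countable D := hDcount.to_subtype
  have hinj : Function.Injective (fun Q : L.Cube => ((L.gen Q, ⟨d Q, hdD Q⟩) : ℤ × D)) := by
    intro Q Q' he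
    simp only [Prod.mk.injEq, Subtype.mk.injEq] at he
    obtain ⟨hg, hdq⟩ := he
    by_contra hne
    have hdisj : Disjoint (L.set Q) (L.set Q') := by
      by_contra hnd
      exact hne (eq_of_gen_eq_not_disjoint L hg hnd)
    have hc'E : L.center Q' ∈ E := L.subset_E Q' (L.center_mem Q')
    have hfar : L.center Q' ∉ ball (L.center Q) (a₀ * (2:ℝ) ^ (-L.gen Q)) := by
      intro hin
      have hmem : L.center Q' ∈ L.set Q := L.ball_subset Q ⟨hc'E, hin⟩
      exact Set.disjoint_right.mp hdisj (L.center_mem Q') hmem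
    apply hfar
    rw [mem_ball]
    have h1 : dist (L.center Q') (d Q') < a₀ * (2:ℝ) ^ (-L.gen Q') / 2 := hdlt Q'
    have h2 : dist (d Q) (L.center Q) < a₀ * (2:ℝ) ^ (-L.gen Q) / 2 := by
      rw [dist_comm]; exact hdlt Q
    calc dist (L.center Q') (L.center Q)
        ≤ dist (L.center Q') (d Q') + dist (d Q') (L.center Q) := dist_triangle _ _ _
      _ = dist (L.center Q') (d Q') + dist (d Q) (L.center Q) := by rw [hdq]
      _ < a₀ * (2:ℝ) ^ (-L.gen Q') / 2 + a₀ * (2:ℝ) ^ (-L.gen Q) / 2 := add_lt_add h1 h2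
      _ = a₀ * (2:ℝ) ^ (-L.gen Q) := by rw [hg]; ring
  exact Function.Injective.countable hinj

/-! ### discrete measure of a cube -/

def mQ (L : DyadicLattice n E a₀ C₁) (α : L.Cube → ℝ≥0∞) (Q : L.Cube) : ℝ≥0∞ :=
  ∑' P : {P : L.Cube // L.set P ⊆ L.set Q}, α P.1

def tl (L : DyadicLattice n E a₀ C₁) (α : L.Cube → ℝ≥0∞) (Q : L.Cube) : ℝ≥0∞ :=
  ∑' P : {P : L.Cube // L.set P ⊆ L.set Q ∧ P ≠ Q}, α P.1

lemma tl_le_mQ (L : DyadicLattice n E a₀ C₁) (α : L.Cube → ℝ≥0∞) (Q : L.Cube) :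
    tl L α Q ≤ mQ L α Q :=
  tsum_pred_le_tsum_pred α (fun _ h => h.1)

lemma add_tl_le_mQ (L : DyadicLattice n E a₀ C₁) (α : L.Cube → ℝ≥0∞) (Q : L.Cube) :
    α Q + tl L α Q ≤ mQ L α Q := by
  have h1 : α Q = ∑' i : {i : L.Cube // i = Q}, α i.1 := by
    rw [tsum_eq_single (⟨Q, rfl⟩ : {i : L.Cube // i = Q})]
    · exact fun x hx => absurd (Subtype.ext x.2) hx
  rw [h1, tl]
  refine le_trans (tsum_pred_add_tsum_pred_le α (p := fun i => i = Q)
    (q := fun i => L.set i ⊆ L.set Q ∧ i ≠ Q) (fun i hp hq => hq.2 hp)) ?_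
  exact tsum_pred_le_tsum_pred α (fun i h => by
    rcases h with rfl | h
    · exact subset_rfl
    · exact h.1)

/-! ### packing of tails over a disjoint family -/

lemma sum_tail_le (L : DyadicLattice n E a₀ C₁) (α : L.Cube → ℝ≥0∞) (Q' : L.Cube)
    (A : Finset L.Cube)
    (hd : ∀ P ∈ A, ∀ R ∈ A, P ≠ R → Disjoint (L.set P) (L.set R))
    (hsub : ∀ P ∈ A, L.set P ⊆ L.set Q') :
    ∑ P ∈ A, tl L α P ≤ mQ L α Q' := by
  have key : ∀ (B : Finset L.Cube), (∀ P ∈ B, ∀ R ∈ B, P ≠ R → Disjoint (L.set P) (L.set R)) →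
      ∑ P ∈ B, tl L α P ≤ ∑' R : {R : L.Cube // ∃ P ∈ B, L.set R ⊆ L.set P ∧ R ≠ P}, α R.1 := by
    intro B
    induction B using Finset.induction_on with
    | empty => intro _; simp
    | @insert P₀ B hP₀ ih =>
      intro hdB
      rw [Finset.sum_insert hP₀]
      have hdisjpq : ∀ R : L.Cube, (L.set R ⊆ L.set P₀ ∧ R ≠ P₀) →
          (∃ P ∈ B, L.set R ⊆ L.set P ∧ R ≠ P) → False := by
        rintro R ⟨h1, -⟩ ⟨P, hPB, h2, -⟩
        have hne : P₀ ≠ P := fun h => hP₀ (h ▸ hPB)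
        have hdisj := hdB P₀ (Finset.mem_insert_self _ _) P (Finset.mem_insert_of_mem hPB) hne
        obtain ⟨x, hx⟩ := L.nonempty R
        exact Set.disjoint_left.mp hdisj (h1 hx) (h2 hx)
      have ihB := ih (fun P hP R hR hne =>
        hdB P (Finset.mem_insert_of_mem hP) R (Finset.mem_insert_of_mem hR) hne)
      calc tl L α P₀ + ∑ P ∈ B, tl L α P
          ≤ (∑' R : {R : L.Cube // L.set R ⊆ L.set P₀ ∧ R ≠ P₀}, α R.1)
            + ∑' R : {R : L.Cube // ∃ P ∈ B, L.set R ⊆ L.set P ∧ R ≠ P}, α R.1 :=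
            add_le_add le_rfl ihB
        _ ≤ ∑' R : {R : L.Cube //
              (L.set R ⊆ L.set P₀ ∧ R ≠ P₀) ∨ (∃ P ∈ B, L.set R ⊆ L.set P ∧ R ≠ P)}, α R.1 :=
            tsum_pred_add_tsum_pred_le α hdisjpq
        _ ≤ ∑' R : {R : L.Cube // ∃ P ∈ insert P₀ B, L.set R ⊆ L.set P ∧ R ≠ P}, α R.1 := by
            refine tsum_pred_le_tsum_pred α fun R h => ?_
            rcases h with h | ⟨P, hP, h2⟩
            · exact ⟨P₀, Finset.mem_insert_self _ _, h⟩
            · exact ⟨P, Finset.mem_insert_of_mem hP, h2⟩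
  refine (key A hd).trans ?_
  refine tsum_pred_le_tsum_pred α fun R h => ?_
  obtain ⟨P, hPA, h1, -⟩ := h
  exact h1.trans (hsub P hPA)

/-! ### the antichain cap coming from badness -/

lemma bad_antichain_cap (L : DyadicLattice n E a₀ C₁) (α : L.Cube → ℝ≥0∞)
    {Q' : L.Cube} {a b : ℝ} (hb : 0 < b) (h2b : 2*b ≤ a)
    (hQ' : mQ L α Q' ≤ ENNReal.ofReal (a+2*b) * surf n E (L.set Q'))
    (A : Finset L.Cube)
    (hd : ∀ P ∈ A, ∀ R ∈ A, P ≠ R → Disjoint (L.set P) (L.set R))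
    (hsub : ∀ P ∈ A, L.set P ⊆ L.set Q')
    (hbad : ∀ P ∈ A, ENNReal.ofReal a * surf n E (L.set P) < tl L α P) :
    ∑ P ∈ A, surf n E (L.set P) ≤ 2 * surf n E (L.set Q') := by
  have ha : (0:ℝ) < a := lt_of_lt_of_le (by linarith) h2b
  have key : ENNReal.ofReal a * ∑ P ∈ A, surf n E (L.set P)
      ≤ ENNReal.ofReal a * (2 * surf n E (L.set Q')) := by
    calc ENNReal.ofReal a * ∑ P ∈ A, surf n E (L.set P)
        = ∑ P ∈ A, ENNReal.ofReal a * surf n E (L.set P) := Finset.mul_sum _ _ _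
      _ ≤ ∑ P ∈ A, tl L α P := Finset.sum_le_sum fun P hP => (hbad P hP).le
      _ ≤ mQ L α Q' := sum_tail_le L α Q' A hd hsub
      _ ≤ ENNReal.ofReal (a+2*b) * surf n E (L.set Q') := hQ'
      _ ≤ ENNReal.ofReal (a*2) * surf n E (L.set Q') :=
          mul_le_mul_left (ENNReal.ofReal_le_ofReal (by linarith)) _
      _ = ENNReal.ofReal a * (2 * surf n E (L.set Q')) := by
          rw [ENNReal.ofReal_mul ha.le, ENNReal.ofReal_ofNat, mul_assoc]
  exact (ENNReal.mul_le_mul_iff_right (ENNReal.ofReal_pos.mpr ha).ne' ENNReal.ofReal_ne_top).mp key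

/-! ### the layer-cake / flow lemma -/

lemma flow (L : DyadicLattice n E a₀ C₁) (W f : L.Cube → ℝ≥0∞) (s : Finset L.Cube)
    (c B : ℝ≥0∞) (hc : c ≠ ⊤)
    (hW : ∀ P ∈ s, W P ≠ ⊤)
    (hh : ∀ P ∈ s, ∑ R ∈ s.filter (fun R => L.set P ⊆ L.set R), f R / W R ≤ c)
    (hB : ∀ t ⊆ s, (∀ P ∈ t, ∀ R ∈ t, P ≠ R → Disjoint (L.set P) (L.set R)) →
      ∑ P ∈ t, W P ≤ B) :
    ∑ P ∈ s, f P ≤ c * B := by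
  set hi : L.Cube → ℝ≥0∞ :=
    fun P => ∑ R ∈ s.filter (fun R => L.set P ⊆ L.set R), f R / W R with hhi
  set lo : L.Cube → ℝ≥0∞ :=
    fun P => ∑ R ∈ s.filter (fun R => L.set P ⊆ L.set R ∧ R ≠ P), f R / W R with hlo
  have hfilter : ∀ P ∈ s, s.filter (fun R => L.set P ⊆ L.set R)
      = insert P (s.filter (fun R => L.set P ⊆ L.set R ∧ R ≠ P)) := by
    intro P hP
    ext R
    simp only [Finset.mem_filter, Finset.mem_insert]
    constructor
    · rintro ⟨hRs, hsub⟩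
      by_cases h : R = P
      · exact Or.inl h
      · exact Or.inr ⟨hRs, hsub, h⟩
    · rintro (rfl | ⟨hRs, hsub, _⟩)
      · exact ⟨hP, subset_rfl⟩
      · exact ⟨hRs, hsub⟩
  have hnotmem : ∀ P : L.Cube, P ∉ s.filter (fun R => L.set P ⊆ L.set R ∧ R ≠ P) := by
    intro P h
    exact (Finset.mem_filter.mp h).2.2 rfl
  have hi_eq : ∀ P ∈ s, hi P = f P / W P + lo P := by
    intro P hP
    rw [hhi]
    simp only
    rw [hfilter P hP, Finset.sum_insert (hnotmem P)]
  have hi_le : ∀ P ∈ s, hi P ≤ c := hh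
  have lo_le_hi : ∀ P ∈ s, lo P ≤ hi P := fun P hP => by
    rw [hi_eq P hP]; exact le_add_self
  have hi_ne : ∀ P ∈ s, hi P ≠ ⊤ :=
    fun P hP => (lt_of_le_of_lt (hi_le P hP) (lt_top_iff_ne_top.mpr hc)).ne
  have lo_ne : ∀ P ∈ s, lo P ≠ ⊤ :=
    fun P hP => (lt_of_le_of_lt ((lo_le_hi P hP).trans (hi_le P hP))
      (lt_top_iff_ne_top.mpr hc)).ne
  have key : ∀ P ∈ s, W P * ENNReal.ofReal ((hi P).toReal - (lo P).toReal) = f P := by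
    intro P hP
    have h1 : hi P - lo P = f P / W P := by
      rw [hi_eq P hP]
      exact ENNReal.add_sub_cancel_right (lo_ne P hP)
    have hsubne : hi P - lo P ≠ ⊤ :=
      (lt_of_le_of_lt tsub_le_self (lt_top_iff_ne_top.mpr (hi_ne P hP))).ne
    have h2 : ENNReal.ofReal ((hi P).toReal - (lo P).toReal) = f P / W P := by
      rw [← ENNReal.toReal_sub_of_le (lo_le_hi P hP) (hi_ne P hP),
        ENNReal.ofReal_toReal hsubne, h1]
    rw [h2]
    rcases eq_or_ne (W P) 0 with hW0 | hW0
    · have hf0 : f P = 0 := by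
        by_contra hf
        have htop : hi P - lo P = ⊤ := by rw [h1, hW0, ENNReal.div_zero hf]
        exact hsubne htop
      simp [hf0, hW0]
    · rw [mul_comm, ENNReal.div_mul_cancel hW0 (hW P hP)]
  have hmeas : ∀ P ∈ s, Measurable fun τ : ℝ =>
      (Set.Ioc ((lo P).toReal) ((hi P).toReal)).indicator (fun _ => W P) τ :=
    fun P _ => measurable_const.indicator measurableSet_Ioc
  have hint : (∫⁻ τ : ℝ, ∑ P ∈ s,
      (Set.Ioc ((lo P).toReal) ((hi P).toReal)).indicator (fun _ => W P) τ)
      = ∑ P ∈ s, f P := by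
    rw [lintegral_finset_sum _ hmeas]
    refine Finset.sum_congr rfl fun P hP => ?_
    rw [lintegral_indicator_const measurableSet_Ioc, Real.volume_Ioc]
    exact key P hP
  have hpt : ∀ τ : ℝ, (∑ P ∈ s,
      (Set.Ioc ((lo P).toReal) ((hi P).toReal)).indicator (fun _ => W P) τ)
      ≤ (Set.Ioc (0:ℝ) c.toReal).indicator (fun _ => B) τ := by
    intro τ
    by_cases hτ : τ ∈ Set.Ioc (0:ℝ) c.toReal
    · rw [Set.indicator_of_mem hτ]
      have heq : (∑ P ∈ s,
          (Set.Ioc ((lo P).toReal) ((hi P).toReal)).indicator (fun _ => W P) τ)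
          = ∑ P ∈ s.filter (fun P => τ ∈ Set.Ioc ((lo P).toReal) ((hi P).toReal)), W P := by
        rw [Finset.sum_filter]
        refine Finset.sum_congr rfl fun P _ => ?_
        by_cases h : τ ∈ Set.Ioc ((lo P).toReal) ((hi P).toReal)
        · rw [Set.indicator_of_mem h, if_pos h]
        · rw [Set.indicator_of_notMem h, if_neg h]
      rw [heq]
      refine hB _ (Finset.filter_subset _ _) ?_
      intro P hP R hR hne
      have hPs := Finset.mem_filter.mp hP
      have hRs := Finset.mem_filter.mp hR
      have main : ∀ P' R' : L.Cube, P' ∈ s → R' ∈ s →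
          τ ∈ Set.Ioc ((lo P').toReal) ((hi P').toReal) →
          τ ∈ Set.Ioc ((lo R').toReal) ((hi R').toReal) →
          P' ≠ R' → L.set P' ⊆ L.set R' → False := by
        intro P' R' hP's hR's hPa hRa hne' hsub
        have hle : hi R' ≤ lo P' := by
          apply Finset.sum_le_sum_of_subset
          intro R'' hR''
          rw [Finset.mem_filter] at hR'' ⊢
          refine ⟨hR''.1, hsub.trans hR''.2, ?_⟩
          rintro rfl
          exact hne' (L.set_inj (subset_antisymm hsub hR''.2))
        have h3 : (hi R').toReal ≤ (lo P').toReal :=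
          ENNReal.toReal_mono (lo_ne P' hP's) hle
        have h4 := hPa.1
        have h5 := hRa.2
        linarith
      rcases nested_or_disjoint L P R with hsub | hsub | hdisj
      · exact absurd (main P R hPs.1 hRs.1 hPs.2 hRs.2 hne hsub) not_false
      · exact absurd (main R P hRs.1 hPs.1 hRs.2 hPs.2 (Ne.symm hne) hsub) not_false
      · exact hdisj
    · rw [Set.indicator_of_notMem hτ]
      have hzero : ∀ P ∈ s,
          (Set.Ioc ((lo P).toReal) ((hi P).toReal)).indicator (fun _ => W P) τ = 0 := by
        intro P hP
        rw [Set.indicator_of_notMem]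
        intro hmem
        apply hτ
        constructor
        · exact lt_of_le_of_lt ENNReal.toReal_nonneg hmem.1
        · exact hmem.2.trans (ENNReal.toReal_mono hc (hi_le P hP))
      rw [Finset.sum_congr rfl hzero]
      simp
  calc ∑ P ∈ s, f P = _ := hint.symm
    _ ≤ ∫⁻ τ : ℝ, (Set.Ioc (0:ℝ) c.toReal).indicator (fun _ => B) τ := lintegral_mono hpt
    _ = B * volume (Set.Ioc (0:ℝ) c.toReal) := lintegral_indicator_const measurableSet_Ioc _
    _ = c * B := by
        rw [Real.volume_Ioc, sub_zero, ENNReal.ofReal_toReal hc, mul_comm]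

/-! ### budget lemma: disjoint families capture disjoint mass -/

lemma tsum_m_le_budget (L : DyadicLattice n E a₀ C₁) (α : L.Cube → ℝ≥0∞) (B : Set L.Cube)
    (hd : ∀ P ∈ B, ∀ R ∈ B, P ≠ R → Disjoint (L.set P) (L.set R)) :
    ∑' Qj : B, mQ L α Qj.1
      ≤ ∑' P : {P : L.Cube // ∃ j ∈ B, L.set P ⊆ L.set j}, α P.1 := by
  have h1 : ∑' Qj : B, mQ L α Qj.1
      = ∑' j : L.Cube, if j ∈ B then mQ L α j else 0 :=
    tsum_pred_eq_tsum_ite (fun j => mQ L α j) (· ∈ B)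
  rw [h1]
  have h2 : ∀ j : L.Cube, (if j ∈ B then mQ L α j else 0)
      = ∑' P : L.Cube, (if j ∈ B ∧ L.set P ⊆ L.set j then α P else 0) := by
    intro j
    rw [mQ, tsum_pred_eq_tsum_ite α (fun P => L.set P ⊆ L.set j), ite_tsum]
    refine tsum_congr fun P => ?_
    by_cases hj : j ∈ B <;> by_cases hP : L.set P ⊆ L.set j <;> simp [hj, hP]
  rw [tsum_congr h2, ENNReal.tsum_comm]
  have h3 : ∀ P : L.Cube, (∑' j : L.Cube, if j ∈ B ∧ L.set P ⊆ L.set j then α P else 0)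
      ≤ (if ∃ j ∈ B, L.set P ⊆ L.set j then α P else 0) := by
    intro P
    by_cases hp : ∃ j ∈ B, L.set P ⊆ L.set j
    · rw [if_pos hp]
      obtain ⟨j₀, hj₀B, hj₀⟩ := hp
      apply tsum_le_of_sum_le'
      intro u
      rw [← Finset.sum_filter]
      have hsubf : u.filter (fun j => j ∈ B ∧ L.set P ⊆ L.set j) ⊆ {j₀} := by
        intro j hj
        rw [Finset.mem_filter] at hj
        rw [Finset.mem_singleton]
        by_contra hne
        have hdisj := hd j hj.2.1 j₀ hj₀B hne
        obtain ⟨x, hx⟩ := L.nonempty P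
        exact Set.disjoint_left.mp hdisj (hj.2.2 hx) (hj₀ hx)
      calc ∑ j ∈ u.filter (fun j => j ∈ B ∧ L.set P ⊆ L.set j), α P
          ≤ ∑ j ∈ ({j₀} : Finset L.Cube), α P := Finset.sum_le_sum_of_subset hsubf
        _ = α P := Finset.sum_singleton _ _
    · rw [if_neg hp]
      have hz : ∀ j : L.Cube, (if j ∈ B ∧ L.set P ⊆ L.set j then α P else 0) = 0 := by
        intro j
        rw [if_neg]
        rintro ⟨hj1, hj2⟩
        exact hp ⟨j, hj1, hj2⟩
      rw [tsum_congr hz]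
      simp
  refine (Summable.tsum_le_tsum h3 ENNReal.summable ENNReal.summable).trans ?_
  exact le_of_eq (tsum_pred_eq_tsum_ite α (fun P => ∃ j ∈ B, L.set P ⊆ L.set j)).symm


lemma filter_insert_self (L : DyadicLattice n E a₀ C₁) (s : Finset L.Cube) {P : L.Cube}
    (hP : P ∈ s) :
    s.filter (fun R => L.set P ⊆ L.set R)
      = insert P (s.filter (fun R => L.set P ⊆ L.set R ∧ R ≠ P)) := by
  ext R
  simp only [Finset.mem_filter, Finset.mem_insert]
  constructor
  · rintro ⟨hRs, hsub⟩
    by_cases h : R = P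
    · exact Or.inl h
    · exact Or.inr ⟨hRs, hsub, h⟩
  · rintro (rfl | ⟨hRs, hsub, _⟩)
    · exact ⟨hP, subset_rfl⟩
    · exact ⟨hRs, hsub⟩

lemma not_mem_strict_filter (L : DyadicLattice n E a₀ C₁) (s : Finset L.Cube) (P : L.Cube) :
    P ∉ s.filter (fun R => L.set P ⊆ L.set R ∧ R ≠ P) := by
  intro h
  exact (Finset.mem_filter.mp h).2.2 rfl


end Corona

/-- the corona-type stopping time lemma, [HM-I, Lemma 7.2].
Let `E` be `n`-ADR with dyadic lattice `D` and let `m(D') = ∑_{P ∈ D'} α_P` be a discrete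
measure with nonnegative coefficients.  If `m(D(Q₀)) ≤ (a+b) σ(Q₀)`, then there is a pairwise
disjoint family `F ⊂ D(Q₀)` such that the restricted measure `m_F` (summing only over cubes not
contained in any member of `F`) satisfies `‖m_F‖_{C(Q₀)} ≤ C b`, and the bad cubes of `F` (those
with `m(D(Q_j) ∖ {Q_j}) > a σ(Q_j)`) occupy at most a fraction `(a+b)/(a+2b)` of `σ(Q₀)`;
here `C = C(n, ADR)`. -/
theorem corona_stopping_lemma (n : ℕ) (Cadr a₀ C₁ : ℝ)
    (hCadr : 1 ≤ Cadr) (ha₀ : 0 < a₀) (hC₁ : 0 < C₁) :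
    ∃ C : ℝ, 0 < C ∧
      ∀ (E : Set (EuclideanSpace ℝ (Fin (n+1)))), IsADR n E Cadr →
      ∀ (L : DyadicLattice n E a₀ C₁) (α : L.Cube → ℝ≥0∞) (Q₀ : L.Cube) (a b : ℝ),
        0 ≤ a → 0 < b →
        (∑' P : {P : L.Cube // L.set P ⊆ L.set Q₀}, α P.1
            ≤ ENNReal.ofReal (a + b) * surf n E (L.set Q₀)) →
        ∃ F : Set L.Cube,
          (∀ Qj ∈ F, L.set Qj ⊆ L.set Q₀) ∧
          (∀ Qj ∈ F, ∀ Qk ∈ F, Qj ≠ Qk → Disjoint (L.set Qj) (L.set Qk)) ∧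
          -- (i) the restricted measure `m_F` satisfies a Carleson condition with constant `C b`
          (∀ Q' : L.Cube, L.set Q' ⊆ L.set Q₀ →
            ∑' P : {P : L.Cube //
                L.set P ⊆ L.set Q' ∧ ¬ ∃ Qj ∈ F, L.set P ⊆ L.set Qj}, α P.1
              ≤ ENNReal.ofReal (C * b) * surf n E (L.set Q')) ∧
          -- (ii) the bad cubes are small:  σ(⋃ F_bad) ⋅ (a+2b) ≤ (a+b) ⋅ σ(Q₀)
          ENNReal.ofReal (a + 2*b) *
              surf n E (⋃ Qj ∈ {Qj ∈ F | ENNReal.ofReal a * surf n E (L.set Qj) <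
                ∑' P : {P : L.Cube // L.set P ⊆ L.set Qj ∧ P ≠ Qj}, α P.1}, L.set Qj)
            ≤ ENNReal.ofReal (a + b) * surf n E (L.set Q₀) := by
  classical
  refine ⟨12, by norm_num, ?_⟩
  intro E hADR L α Q₀ a b ha hb hm
  haveI : Countable L.Cube := Corona.cube_countable L ha₀
  by_cases hσtop : surf n E (L.set Q₀) = ⊤
  · -- trivial branch : σ(Q₀) = ∞, take F = {Q₀}
    refine ⟨{Q₀}, ?_, ?_, ?_, ?_⟩
    · intro Qj hQj
      rw [Set.mem_singleton_iff] at hQj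
      subst hQj
      exact subset_rfl
    · intro Qj hQj Qk hQk hne
      rw [Set.mem_singleton_iff] at hQj hQk
      exact absurd (hQj.trans hQk.symm) hne
    · intro Q' hQ'
      haveI : IsEmpty {P : L.Cube //
          L.set P ⊆ L.set Q' ∧ ¬ ∃ Qj ∈ ({Q₀} : Set L.Cube), L.set P ⊆ L.set Qj} := by
        constructor
        rintro ⟨P, hP1, hP2⟩
        exact hP2 ⟨Q₀, Set.mem_singleton _, hP1.trans hQ'⟩
      rw [tsum_empty]
      exact zero_le
    · have hrhs : ENNReal.ofReal (a+b) * surf n E (L.set Q₀) = ⊤ := by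
        rw [hσtop, ENNReal.mul_top (ENNReal.ofReal_pos.mpr (by linarith)).ne']
      rw [hrhs]
      exact le_top
  rcases le_or_gt a (2*b) with hreg | hreg
  · -- regime 1 : a ≤ 2b, stop where m(D(Q)) > (a+2b)σ(Q)
    set S₁ : Set L.Cube := {Q | L.set Q ⊆ L.set Q₀ ∧
      ENNReal.ofReal (a+2*b) * surf n E (L.set Q) < Corona.mQ L α Q} with hS₁def
    set F : Set L.Cube := {Q | Q ∈ S₁ ∧ ∀ R ∈ S₁, L.set Q ⊆ L.set R → R = Q} with hFdef
    have hFsub : ∀ Qj ∈ F, L.set Qj ⊆ L.set Q₀ := fun Qj hQj => hQj.1.1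
    have hFdisj : ∀ Qj ∈ F, ∀ Qk ∈ F, Qj ≠ Qk → Disjoint (L.set Qj) (L.set Qk) := by
      intro Qj hQj Qk hQk hne
      rcases Corona.nested_or_disjoint L Qj Qk with h | h | h
      · exact absurd (hQj.2 Qk hQk.1 h) (Ne.symm hne)
      · exact absurd (hQk.2 Qj hQj.1 h) hne
      · exact h
    have hcover : ∀ P ∈ S₁, ∃ Qj ∈ F, L.set P ⊆ L.set Qj := by
      intro P hP
      obtain ⟨M, hM, hPM⟩ := Corona.exists_maximal L S₁ (fun Q hQ => hQ.1) hP
      exact ⟨M, hM, hPM⟩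
    refine ⟨F, hFsub, hFdisj, ?_, ?_⟩
    · intro Q' hQ'0
      by_cases hcov : ∃ Qj ∈ F, L.set Q' ⊆ L.set Qj
      · haveI : IsEmpty {P : L.Cube //
            L.set P ⊆ L.set Q' ∧ ¬ ∃ Qj ∈ F, L.set P ⊆ L.set Qj} := by
          constructor
          rintro ⟨P, hP1, hP2⟩
          obtain ⟨Qj, hQjF, hsub⟩ := hcov
          exact hP2 ⟨Qj, hQjF, hP1.trans hsub⟩
        rw [tsum_empty]
        exact zero_le
      · have hQ'S : Q' ∉ S₁ := fun h => hcov (hcover Q' h)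
        have hQ'le : Corona.mQ L α Q' ≤ ENNReal.ofReal (a+2*b) * surf n E (L.set Q') := by
          by_contra hlt
          push_neg at hlt
          exact hQ'S ⟨hQ'0, hlt⟩
        calc (∑' P : {P : L.Cube //
              L.set P ⊆ L.set Q' ∧ ¬ ∃ Qj ∈ F, L.set P ⊆ L.set Qj}, α P.1)
            ≤ Corona.mQ L α Q' := Corona.tsum_pred_le_tsum_pred α (fun P h => h.1)
          _ ≤ ENNReal.ofReal (a+2*b) * surf n E (L.set Q') := hQ'le
          _ ≤ ENNReal.ofReal (12*b) * surf n E (L.set Q') :=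
              mul_le_mul_left (ENNReal.ofReal_le_ofReal (by linarith)) _
    · set BAD : Set L.Cube := {Qj ∈ F | ENNReal.ofReal a * surf n E (L.set Qj) <
        ∑' P : {P : L.Cube // L.set P ⊆ L.set Qj ∧ P ≠ Qj}, α P.1} with hBADdef
      have hBADdisj : ∀ P ∈ BAD, ∀ R ∈ BAD, P ≠ R → Disjoint (L.set P) (L.set R) :=
        fun P hP R hR hne => hFdisj P hP.1 R hR.1 hne
      calc ENNReal.ofReal (a + 2*b) * surf n E (⋃ Qj ∈ BAD, L.set Qj)
          ≤ ENNReal.ofReal (a + 2*b) * ∑' Qj : BAD, surf n E (L.set Qj.1) :=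
            mul_le_mul_right (measure_biUnion_le _ (Set.to_countable _) _) _
        _ = ∑' Qj : BAD, ENNReal.ofReal (a + 2*b) * surf n E (L.set Qj.1) :=
            (ENNReal.tsum_mul_left).symm
        _ ≤ ∑' Qj : BAD, Corona.mQ L α Qj.1 :=
            Summable.tsum_le_tsum (fun Qj => (Qj.2.1.1.2).le) ENNReal.summable ENNReal.summable
        _ ≤ ∑' P : {P : L.Cube // ∃ j ∈ BAD, L.set P ⊆ L.set j}, α P.1 :=
            Corona.tsum_m_le_budget L α BAD hBADdisj
        _ ≤ Corona.mQ L α Q₀ := Corona.tsum_pred_le_tsum_pred α (fun P h => by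
            obtain ⟨j, hjB, hPj⟩ := h
            exact hPj.trans (hFsub j hjB.1))
        _ ≤ ENNReal.ofReal (a + b) * surf n E (L.set Q₀) := hm
  · -- regime 2 : 2b < a
    have h2b : 2*b ≤ a := hreg.le
    have ha0 : (0:ℝ) < a := lt_of_le_of_lt (by linarith) hreg
    set ηs : L.Cube → ℝ≥0∞ := fun Q =>
      ∑' R : {R : L.Cube // L.set Q ⊆ L.set R ∧ L.set R ⊆ L.set Q₀ ∧ R ≠ Q},
        α R.1 / surf n E (L.set R.1) with hηsdef
    set S₂ : Set L.Cube := {Q | L.set Q ⊆ L.set Q₀ ∧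
      (¬ (ENNReal.ofReal a * surf n E (L.set Q) < Corona.tl L α Q) ∨
        ENNReal.ofReal (a+2*b) * surf n E (L.set Q) < Corona.mQ L α Q ∨
        ENNReal.ofReal (2*b) * surf n E (L.set Q) < α Q ∨
        ENNReal.ofReal (4*b) < ηs Q)} with hS₂def
    set F : Set L.Cube := {Q | Q ∈ S₂ ∧ ∀ R ∈ S₂, L.set Q ⊆ L.set R → R = Q} with hFdef
    have hFsub : ∀ Qj ∈ F, L.set Qj ⊆ L.set Q₀ := fun Qj hQj => hQj.1.1
    have hFdisj : ∀ Qj ∈ F, ∀ Qk ∈ F, Qj ≠ Qk → Disjoint (L.set Qj) (L.set Qk) := by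
      intro Qj hQj Qk hQk hne
      rcases Corona.nested_or_disjoint L Qj Qk with h | h | h
      · exact absurd (hQj.2 Qk hQk.1 h) (Ne.symm hne)
      · exact absurd (hQk.2 Qj hQj.1 h) hne
      · exact h
    have hcover : ∀ P ∈ S₂, ∃ Qj ∈ F, L.set P ⊆ L.set Qj := by
      intro P hP
      obtain ⟨M, hM, hPM⟩ := Corona.exists_maximal L S₂ (fun Q hQ => hQ.1) hP
      exact ⟨M, hM, hPM⟩
    have hfree : ∀ P : L.Cube, L.set P ⊆ L.set Q₀ →
        ¬ (∃ Qj ∈ F, L.set P ⊆ L.set Qj) →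
        (ENNReal.ofReal a * surf n E (L.set P) < Corona.tl L α P) ∧
        Corona.mQ L α P ≤ ENNReal.ofReal (a+2*b) * surf n E (L.set P) ∧
        α P ≤ ENNReal.ofReal (2*b) * surf n E (L.set P) ∧
        ηs P ≤ ENNReal.ofReal (4*b) := by
      intro P hP0 hnc
      have hPS : P ∉ S₂ := fun h => hnc (hcover P h)
      have hdis : ¬ (¬ (ENNReal.ofReal a * surf n E (L.set P) < Corona.tl L α P) ∨
          ENNReal.ofReal (a+2*b) * surf n E (L.set P) < Corona.mQ L α P ∨
          ENNReal.ofReal (2*b) * surf n E (L.set P) < α P ∨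
          ENNReal.ofReal (4*b) < ηs P) := fun h => hPS ⟨hP0, h⟩
      push_neg at hdis
      exact hdis
    refine ⟨F, hFsub, hFdisj, ?_, ?_⟩
    · -- (i)
      intro Q' hQ'0
      by_cases hcov : ∃ Qj ∈ F, L.set Q' ⊆ L.set Qj
      · haveI : IsEmpty {P : L.Cube //
            L.set P ⊆ L.set Q' ∧ ¬ ∃ Qj ∈ F, L.set P ⊆ L.set Qj} := by
          constructor
          rintro ⟨P, hP1, hP2⟩
          obtain ⟨Qj, hQjF, hsub⟩ := hcov
          exact hP2 ⟨Qj, hQjF, hP1.trans hsub⟩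
        rw [tsum_empty]
        exact zero_le
      · have hQ'free := hfree Q' hQ'0 hcov
        rw [ENNReal.tsum_eq_iSup_sum]
        refine iSup_le fun sfin => ?_
        set s' : Finset L.Cube := sfin.image Subtype.val with hs'def
        have hsum_eq : (∑ P ∈ sfin, α P.1) = ∑ P ∈ s', α P := by
          rw [hs'def, Finset.sum_image (fun x _ y _ hxy => Subtype.ext hxy)]
        rw [hsum_eq]
        have hmem : ∀ P ∈ s', L.set P ⊆ L.set Q' ∧ ¬ ∃ Qj ∈ F, L.set P ⊆ L.set Qj := by
          intro P hP
          rw [hs'def, Finset.mem_image] at hP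
          obtain ⟨x, _, rfl⟩ := hP
          exact x.2
        have hmemQ₀ : ∀ P ∈ s', L.set P ⊆ L.set Q₀ :=
          fun P hP => ((hmem P hP).1).trans hQ'0
        have hPfree : ∀ P ∈ s',
            (ENNReal.ofReal a * surf n E (L.set P) < Corona.tl L α P) ∧
            Corona.mQ L α P ≤ ENNReal.ofReal (a+2*b) * surf n E (L.set P) ∧
            α P ≤ ENNReal.ofReal (2*b) * surf n E (L.set P) ∧
            ηs P ≤ ENNReal.ofReal (4*b) :=
          fun P hP => hfree P (hmemQ₀ P hP) (hmem P hP).2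
        have hW : ∀ P ∈ s', surf n E (L.set P) ≠ ⊤ :=
          fun P hP => ne_top_of_le_ne_top hσtop (measure_mono (hmemQ₀ P hP))
        have hh : ∀ P ∈ s', (∑ R ∈ s'.filter (fun R => L.set P ⊆ L.set R),
            α R / surf n E (L.set R)) ≤ ENNReal.ofReal (6*b) := by
          intro P hP
          rw [Corona.filter_insert_self L s' hP,
            Finset.sum_insert (Corona.not_mem_strict_filter L s' P)]
          have hα : α P / surf n E (L.set P) ≤ ENNReal.ofReal (2*b) := by
            rcases eq_or_ne (surf n E (L.set P)) 0 with h0 | h0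
            · have hα0 : α P = 0 := by
                have := (hPfree P hP).2.2.1
                rw [h0, mul_zero] at this
                exact le_antisymm this zero_le
              simp [hα0]
            · rw [ENNReal.div_le_iff h0 (hW P hP)]
              exact (hPfree P hP).2.2.1
          have hηpart : (∑ R ∈ s'.filter (fun R => L.set P ⊆ L.set R ∧ R ≠ P),
              α R / surf n E (L.set R)) ≤ ηs P := by
            have hattach : (∑ R ∈ s'.filter (fun R => L.set P ⊆ L.set R ∧ R ≠ P),
                α R / surf n E (L.set R))
                = ∑ x ∈ ((s'.filter (fun R => L.set P ⊆ L.set R ∧ R ≠ P)).attach.map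
                    ⟨fun x => (⟨x.1, by
                        have hx := Finset.mem_filter.mp x.2
                        exact ⟨hx.2.1, hmemQ₀ x.1 hx.1, hx.2.2⟩⟩ :
                      {R : L.Cube // L.set P ⊆ L.set R ∧ L.set R ⊆ L.set Q₀ ∧ R ≠ P}),
                      fun x y hxy => Subtype.ext (by have h := congrArg Subtype.val hxy; exact h)⟩),
                    α x.1 / surf n E (L.set x.1) := by
              rw [Finset.sum_map]
              exact (Finset.sum_attach _ _).symm
            rw [hattach]
            exact ENNReal.sum_le_tsum _
          calc α P / surf n E (L.set P)
              + (∑ R ∈ s'.filter (fun R => L.set P ⊆ L.set R ∧ R ≠ P),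
                  α R / surf n E (L.set R))
              ≤ ENNReal.ofReal (2*b) + ENNReal.ofReal (4*b) :=
                add_le_add hα (hηpart.trans (hPfree P hP).2.2.2)
            _ = ENNReal.ofReal (6*b) := by
                rw [← ENNReal.ofReal_add (by positivity) (by positivity)]
                ring_nf
        have hB : ∀ t ⊆ s', (∀ P ∈ t, ∀ R ∈ t, P ≠ R → Disjoint (L.set P) (L.set R)) →
            ∑ P ∈ t, surf n E (L.set P) ≤ 2 * surf n E (L.set Q') := by
          intro t hts hdisj
          refine Corona.bad_antichain_cap L α hb h2b hQ'free.2.1 t hdisj ?_ ?_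
          · intro P hP
            exact (hmem P (hts hP)).1
          · intro P hP
            exact (hPfree P (hts hP)).1
        calc ∑ P ∈ s', α P
            ≤ ENNReal.ofReal (6*b) * (2 * surf n E (L.set Q')) :=
              Corona.flow L (fun Q => surf n E (L.set Q)) α s'
                (ENNReal.ofReal (6*b)) (2 * surf n E (L.set Q'))
                ENNReal.ofReal_ne_top hW hh hB
          _ = ENNReal.ofReal (12*b) * surf n E (L.set Q') := by
              rw [← mul_assoc]
              congr 1
              rw [show (2:ℝ≥0∞) = ENNReal.ofReal 2 from (ENNReal.ofReal_ofNat 2).symm,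
                ← ENNReal.ofReal_mul (by positivity)]
              exact congrArg ENNReal.ofReal (by ring)
    · -- (ii)
      set BAD : Set L.Cube := {Qj ∈ F | ENNReal.ofReal a * surf n E (L.set Qj) <
        ∑' P : {P : L.Cube // L.set P ⊆ L.set Qj ∧ P ≠ Qj}, α P.1} with hBADdef
      have hBADdisj : ∀ P ∈ BAD, ∀ R ∈ BAD, P ≠ R → Disjoint (L.set P) (L.set R) :=
        fun P hP R hR hne => hFdisj P hP.1 R hR.1 hne
      set Gd : L.Cube → Prop := fun R =>
        L.set R ⊆ L.set Q₀ ∧ ¬ ∃ Qk ∈ F, L.set R ⊆ L.set Qk with hGddef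
      set ηf : L.Cube → ℝ≥0∞ := fun j =>
        ∑' R : {R : L.Cube // (L.set j ⊆ L.set R ∧ R ≠ j) ∧ Gd R},
          α R.1 / surf n E (L.set R.1) with hηfdef
      have hηsf : ∀ j ∈ F, ηs j ≤ ηf j := by
        intro j hjF
        refine Corona.tsum_pred_le_tsum_pred (fun R => α R / surf n E (L.set R))
          (fun R h => ?_)
        obtain ⟨h1, h2, h3⟩ := h
        refine ⟨⟨h1, h3⟩, h2, ?_⟩
        rintro ⟨Qk, hQkF, hRk⟩
        have hQkj : Qk = j := hjF.2 Qk hQkF.1 (h1.trans hRk)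
        subst hQkj
        exact h3 (L.set_inj (subset_antisymm hRk h1))
      have hcredit : ∀ j ∈ BAD, 2 * (ENNReal.ofReal (a+2*b) * surf n E (L.set j))
          ≤ 2 * Corona.mQ L α j + surf n E (L.set j) * ηf j := by
        intro j hj
        have hjF : j ∈ F := hj.1
        have hjbad : ENNReal.ofReal a * surf n E (L.set j) < Corona.tl L α j := hj.2
        rcases hjF.1.2 with hnb | hmcase | hαcase | hηcase
        · exact absurd hjbad hnb
        · calc 2 * (ENNReal.ofReal (a+2*b) * surf n E (L.set j))
              ≤ 2 * Corona.mQ L α j := mul_le_mul_right hmcase.le 2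
            _ ≤ 2 * Corona.mQ L α j + surf n E (L.set j) * ηf j := le_self_add
        · have h1 : ENNReal.ofReal (a+2*b) * surf n E (L.set j) ≤ Corona.mQ L α j := by
            calc ENNReal.ofReal (a+2*b) * surf n E (L.set j)
                = ENNReal.ofReal a * surf n E (L.set j)
                  + ENNReal.ofReal (2*b) * surf n E (L.set j) := by
                  rw [← add_mul, ← ENNReal.ofReal_add ha (by positivity)]
              _ ≤ Corona.tl L α j + α j := add_le_add hjbad.le hαcase.le
              _ = α j + Corona.tl L α j := add_comm _ _
              _ ≤ Corona.mQ L α j := Corona.add_tl_le_mQ L α j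
          calc 2 * (ENNReal.ofReal (a+2*b) * surf n E (L.set j))
              ≤ 2 * Corona.mQ L α j := mul_le_mul_right h1 2
            _ ≤ 2 * Corona.mQ L α j + surf n E (L.set j) * ηf j := le_self_add
        · have hηfj : ENNReal.ofReal (4*b) ≤ ηf j := (hηcase.trans_le (hηsf j hjF)).le
          have h4b : ENNReal.ofReal (4*b) = 2 * ENNReal.ofReal (2*b) := by
            rw [show (2:ℝ≥0∞) = ENNReal.ofReal 2 from (ENNReal.ofReal_ofNat 2).symm,
              ← ENNReal.ofReal_mul (by norm_num)]
            exact congrArg ENNReal.ofReal (by ring)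
          have e1 : 2 * (ENNReal.ofReal (a+2*b) * surf n E (L.set j))
              = 2 * (ENNReal.ofReal a * surf n E (L.set j))
                + surf n E (L.set j) * ENNReal.ofReal (4*b) := by
            rw [ENNReal.ofReal_add ha (by positivity), h4b]
            ring
          calc 2 * (ENNReal.ofReal (a+2*b) * surf n E (L.set j))
              = 2 * (ENNReal.ofReal a * surf n E (L.set j))
                + surf n E (L.set j) * ENNReal.ofReal (4*b) := e1
            _ ≤ 2 * Corona.tl L α j + surf n E (L.set j) * ηf j :=
                add_le_add (mul_le_mul_right hjbad.le 2) (mul_le_mul_right hηfj _)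
            _ ≤ 2 * Corona.mQ L α j + surf n E (L.set j) * ηf j :=
                add_le_add_left (mul_le_mul_right (Corona.tl_le_mQ L α j) 2) _
      have hfub : (∑' j : BAD, surf n E (L.set j.1) * ηf j.1)
          ≤ 2 * ∑' R : {R : L.Cube // Gd R}, α R.1 := by
        have e1 : (∑' j : BAD, surf n E (L.set j.1) * ηf j.1)
            = ∑' (j : L.Cube) (R : L.Cube),
              (if j ∈ BAD ∧ ((L.set j ⊆ L.set R ∧ R ≠ j) ∧ Gd R)
                then surf n E (L.set j) * (α R / surf n E (L.set R)) else 0) := by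
          rw [Corona.tsum_pred_eq_tsum_ite (fun j => surf n E (L.set j) * ηf j) (· ∈ BAD)]
          refine tsum_congr fun j => ?_
          by_cases hj : j ∈ BAD
          · rw [if_pos hj]
            rw [hηfdef]
            simp only
            rw [← ENNReal.tsum_mul_left,
              Corona.tsum_pred_eq_tsum_ite
                (fun R => surf n E (L.set j) * (α R / surf n E (L.set R)))
                (fun R => (L.set j ⊆ L.set R ∧ R ≠ j) ∧ Gd R)]
            refine tsum_congr fun R => ?_
            by_cases hc : (L.set j ⊆ L.set R ∧ R ≠ j) ∧ Gd R
            · rw [if_pos hc, if_pos ⟨hj, hc⟩]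
            · rw [if_neg hc, if_neg (fun h => hc h.2)]
          · rw [if_neg hj]
            symm
            have hz : ∀ R : L.Cube,
                (if j ∈ BAD ∧ ((L.set j ⊆ L.set R ∧ R ≠ j) ∧ Gd R)
                  then surf n E (L.set j) * (α R / surf n E (L.set R)) else 0) = 0 :=
              fun R => if_neg (fun h => hj h.1)
            rw [tsum_congr hz]
            exact tsum_zero
        rw [e1, ENNReal.tsum_comm]
        have e3 : ∀ R : L.Cube, (∑' j : L.Cube,
            if j ∈ BAD ∧ ((L.set j ⊆ L.set R ∧ R ≠ j) ∧ Gd R)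
              then surf n E (L.set j) * (α R / surf n E (L.set R)) else 0)
            ≤ (if Gd R then 2 * α R else 0) := by
          intro R
          by_cases hR : Gd R
          · rw [if_pos hR]
            have e4 : ∀ j : L.Cube,
                (if j ∈ BAD ∧ ((L.set j ⊆ L.set R ∧ R ≠ j) ∧ Gd R)
                  then surf n E (L.set j) * (α R / surf n E (L.set R)) else 0)
                = (α R / surf n E (L.set R)) * (if j ∈ BAD ∧ (L.set j ⊆ L.set R ∧ R ≠ j)
                    then surf n E (L.set j) else 0) := by
              intro j
              by_cases hc : j ∈ BAD ∧ (L.set j ⊆ L.set R ∧ R ≠ j)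
              · rw [if_pos ⟨hc.1, hc.2, hR⟩, if_pos hc, mul_comm]
              · rw [if_neg (fun h => hc ⟨h.1, h.2.1⟩), if_neg hc, mul_zero]
            rw [tsum_congr e4, ENNReal.tsum_mul_left]
            have hRfree := hfree R hR.1 hR.2
            have hcap : (∑' j : L.Cube, if j ∈ BAD ∧ (L.set j ⊆ L.set R ∧ R ≠ j)
                then surf n E (L.set j) else 0) ≤ 2 * surf n E (L.set R) := by
              apply Corona.tsum_le_of_sum_le'
              intro u
              rw [← Finset.sum_filter]
              refine Corona.bad_antichain_cap L α hb h2b hRfree.2.1 _ ?_ ?_ ?_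
              · intro P hP Rk hRk hne
                rw [Finset.mem_filter] at hP hRk
                exact hFdisj P hP.2.1.1 Rk hRk.2.1.1 hne
              · intro P hP
                rw [Finset.mem_filter] at hP
                exact hP.2.2.1
              · intro P hP
                rw [Finset.mem_filter] at hP
                exact hP.2.1.2
            calc (α R / surf n E (L.set R)) * (∑' j : L.Cube,
                if j ∈ BAD ∧ (L.set j ⊆ L.set R ∧ R ≠ j) then surf n E (L.set j) else 0)
                ≤ (α R / surf n E (L.set R)) * (2 * surf n E (L.set R)) :=
                  mul_le_mul_right hcap _
              _ = 2 * (α R / surf n E (L.set R) * surf n E (L.set R)) := by ring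
              _ ≤ 2 * α R := mul_le_mul_right (Corona.div_mul_le _ _) _
          · rw [if_neg hR]
            have hz : ∀ j : L.Cube,
                (if j ∈ BAD ∧ ((L.set j ⊆ L.set R ∧ R ≠ j) ∧ Gd R)
                  then surf n E (L.set j) * (α R / surf n E (L.set R)) else 0) = 0 :=
              fun j => if_neg (fun h => hR h.2.2)
            rw [tsum_congr hz]
            rw [tsum_zero]
        have e5 : (∑' R : L.Cube, if Gd R then 2 * α R else 0)
            = 2 * ∑' R : {R : L.Cube // Gd R}, α R.1 := by
          rw [← ENNReal.tsum_mul_left]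
          rw [Corona.tsum_pred_eq_tsum_ite (fun R => 2 * α R) Gd]
          exact tsum_congr fun R => by by_cases h : Gd R <;> simp [h]
        exact (Summable.tsum_le_tsum e3 ENNReal.summable ENNReal.summable).trans (le_of_eq e5)
      have hbudget : (∑' j : BAD, Corona.mQ L α j.1)
          + (∑' R : {R : L.Cube // Gd R}, α R.1) ≤ Corona.mQ L α Q₀ := by
        have h1 := Corona.tsum_m_le_budget L α BAD hBADdisj
        have h2 : (∑' P : {P : L.Cube // ∃ j ∈ BAD, L.set P ⊆ L.set j}, α P.1)
            + (∑' R : {R : L.Cube // Gd R}, α R.1)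
            ≤ ∑' P : {P : L.Cube // (∃ j ∈ BAD, L.set P ⊆ L.set j) ∨ Gd P}, α P.1 :=
          Corona.tsum_pred_add_tsum_pred_le α (fun P hp hq => by
            obtain ⟨j, hjB, hPj⟩ := hp
            exact hq.2 ⟨j, hjB.1, hPj⟩)
        have h3 : (∑' P : {P : L.Cube // (∃ j ∈ BAD, L.set P ⊆ L.set j) ∨ Gd P}, α P.1)
            ≤ Corona.mQ L α Q₀ :=
          Corona.tsum_pred_le_tsum_pred α (fun P h => by
            rcases h with ⟨j, hjB, hPj⟩ | h
            · exact hPj.trans (hFsub j hjB.1)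
            · exact h.1)
        calc (∑' j : BAD, Corona.mQ L α j.1) + (∑' R : {R : L.Cube // Gd R}, α R.1)
            ≤ (∑' P : {P : L.Cube // ∃ j ∈ BAD, L.set P ⊆ L.set j}, α P.1)
              + (∑' R : {R : L.Cube // Gd R}, α R.1) := add_le_add_left h1 _
          _ ≤ _ := h2
          _ ≤ _ := h3
      have main : ENNReal.ofReal (a+2*b) * (∑' j : BAD, surf n E (L.set j.1))
          ≤ Corona.mQ L α Q₀ := by
        have h2X : 2 * (ENNReal.ofReal (a+2*b) * ∑' j : BAD, surf n E (L.set j.1))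
            ≤ 2 * Corona.mQ L α Q₀ := by
          calc 2 * (ENNReal.ofReal (a+2*b) * ∑' j : BAD, surf n E (L.set j.1))
              = ∑' j : BAD, 2 * (ENNReal.ofReal (a+2*b) * surf n E (L.set j.1)) := by
                rw [ENNReal.tsum_mul_left, ENNReal.tsum_mul_left]
            _ ≤ ∑' j : BAD, (2 * Corona.mQ L α j.1 + surf n E (L.set j.1) * ηf j.1) :=
                Summable.tsum_le_tsum (fun j => hcredit j.1 j.2) ENNReal.summable ENNReal.summable
            _ = 2 * (∑' j : BAD, Corona.mQ L α j.1)
                + ∑' j : BAD, surf n E (L.set j.1) * ηf j.1 := by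
                rw [ENNReal.tsum_add, ENNReal.tsum_mul_left]
            _ ≤ 2 * (∑' j : BAD, Corona.mQ L α j.1)
                + 2 * ∑' R : {R : L.Cube // Gd R}, α R.1 := add_le_add_right hfub _
            _ = 2 * ((∑' j : BAD, Corona.mQ L α j.1)
                + ∑' R : {R : L.Cube // Gd R}, α R.1) := by ring
            _ ≤ 2 * Corona.mQ L α Q₀ := mul_le_mul_right hbudget _
        exact (ENNReal.mul_le_mul_iff_right two_ne_zero ENNReal.ofNat_ne_top).mp h2X
      calc ENNReal.ofReal (a + 2*b) * surf n E (⋃ Qj ∈ BAD, L.set Qj)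
          ≤ ENNReal.ofReal (a + 2*b) * ∑' j : BAD, surf n E (L.set j.1) :=
            mul_le_mul_right (measure_biUnion_le _ (Set.to_countable _) _) _
        _ ≤ Corona.mQ L α Q₀ := main
        _ ≤ ENNReal.ofReal (a + b) * surf n E (L.set Q₀) := hm
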